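/- arXiv:1207.0489 — 5 statements merged into one kernel-verified Lean document; each statement's English description precedes it below -/
import Mathlib

section
/- Jensen's inequality for conditional sublinear expectations: for any convex function φ: ℝ → ℝ and any t, if X and φ(X) are both in H, then E_t(φ(X)) ≥ φ(E_t(X)). -/
open MeasureTheory Filter Set

/-- An `F_t`-consistent sublinear expectation (`SL`-expectation) in discrete time:
a filtration `F t` of sub-σ-algebras, a space `H` of measurable real functions closed
under constants, `|·|`, addition, scalar multiplication and multiplication by indicators,
and conditional expectations `Et t : H → H ∩ mF_t` satisfying monotonicity, the tower
property, locality, projection, sub-additivity, positive homogeneity and the monotone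
continuity (Fatou) property.  `E := Et 0` is identified with a real-valued functional. -/
structure CondSLExp (Ω : Type*) [m : MeasurableSpace Ω] where
  F : ℕ → MeasurableSpace Ω
  F_le : ∀ t, F t ≤ m
  F_mono : Monotone F
  H : Set (Ω → ℝ)
  H_meas : ∀ X ∈ H, Measurable X
  const_mem : ∀ c : ℝ, (fun _ => c) ∈ H
  abs_mem : ∀ X ∈ H, (fun ω => |X ω|) ∈ H
  add_mem : ∀ X ∈ H, ∀ Y ∈ H, X + Y ∈ H
  smul_mem : ∀ (c : ℝ), ∀ X ∈ H, c • X ∈ H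
  indmul_mem : ∀ (A : Set Ω), MeasurableSet A → ∀ X ∈ H, A.indicator X ∈ H
  Et : ℕ → (Ω → ℝ) → (Ω → ℝ)
  E : (Ω → ℝ) → ℝ
  E0_eq : ∀ X ∈ H, ∀ ω, Et 0 X ω = E X
  Et_mem : ∀ t, ∀ X ∈ H, Et t X ∈ H
  Et_meas : ∀ t, ∀ X ∈ H, Measurable[F t] (Et t X)
  mono : ∀ t, ∀ X ∈ H, ∀ Y ∈ H, (∀ ω, X ω ≤ Y ω) → ∀ ω, Et t X ω ≤ Et t Y ω
  tower : ∀ s t : ℕ, s ≤ t → ∀ Y ∈ H, Et s (Et t Y) = Et s Y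
  locality : ∀ (t : ℕ) (A : Set Ω), MeasurableSet[F t] A → ∀ Y ∈ H,
      Et t (A.indicator Y) = A.indicator (Et t Y)
  proj : ∀ t, ∀ Y ∈ H, Measurable[F t] Y → Et t Y = Y
  subadd : ∀ t, ∀ X ∈ H, ∀ Y ∈ H, ∀ ω, Et t (X + Y) ω ≤ Et t X ω + Et t Y ω
  poshom : ∀ (t : ℕ) (lam : Ω → ℝ), lam ∈ H → Measurable[F t] lam → ∀ Y ∈ H,
      (fun ω => lam ω * Y ω) ∈ H →
      ∀ ω, Et t (fun ω' => lam ω' * Y ω') ω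
        = max (lam ω) 0 * Et t Y ω + max (-(lam ω)) 0 * Et t (fun ω' => -(Y ω')) ω
  fatou : ∀ X : ℕ → Ω → ℝ, (∀ i, X i ∈ H) → (∀ ω, Antitone fun i => X i ω) →
      (∀ ω, Tendsto (fun i => X i ω) atTop (nhds 0)) →
      Tendsto (fun i => E (X i)) atTop (nhds 0)

variable {Ω : Type*} [MeasurableSpace Ω]

/-- The upper capacity `V(A) := E(I_A)`. -/
noncomputable def CondSLExp.V (S : CondSLExp Ω) (A : Set Ω) : ℝ :=
  S.E (A.indicator fun _ => (1 : ℝ))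

/-- A property holds quasi-surely if it holds outside a set `N` with `E(I_N) = 0`. -/
def CondSLExp.QS (S : CondSLExp Ω) (P : Ω → Prop) : Prop :=
  ∃ N : Set Ω, S.V N = 0 ∧ ∀ ω ∉ N, P ω

/-- `X` is independent of `F n`: `X` is independent of `I_A` under `E` for every
`A ∈ F n`, i.e. `E(φ(I_A, X)) = E(φ̄(I_A))` where `φ̄(x) := E(φ(x, X))`. -/
def CondSLExp.IndepOf (S : CondSLExp Ω) (X : Ω → ℝ) (n : ℕ) : Prop :=
  ∀ A : Set Ω, MeasurableSet[S.F n] A → ∀ φ : ℝ → ℝ → ℝ,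
    (fun ω => φ (A.indicator (fun _ => (1 : ℝ)) ω) (X ω)) ∈ S.H →
    (∀ x : ℝ, (fun ω => φ x (X ω)) ∈ S.H) →
    (fun ω => S.E fun ω' => φ (A.indicator (fun _ => (1 : ℝ)) ω) (X ω')) ∈ S.H →
    S.E (fun ω => φ (A.indicator (fun _ => (1 : ℝ)) ω) (X ω)) =
      S.E (fun ω => S.E fun ω' => φ (A.indicator (fun _ => (1 : ℝ)) ω) (X ω'))

/-- Membership in `L_b¹`, via the characterization
`L_b¹ = {X ∈ L¹ : lim_n E(|X| I_{|X|>n}) = 0}`. -/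
def CondSLExp.InLb1 (S : CondSLExp Ω) (X : Ω → ℝ) : Prop :=
  Tendsto (fun n : ℕ => S.E fun ω => if (n : ℝ) < |X ω| then |X ω| else 0)
    atTop (nhds 0)

lemma exists_support_line {φ : ℝ → ℝ} (hφ : ConvexOn ℝ Set.univ φ) (x₀ : ℝ) :
    ∃ a : ℝ, ∀ y, φ x₀ + a * (y - x₀) ≤ φ y := by
  set T : Set ℝ := (fun x => (φ x₀ - φ x) / (x₀ - x)) '' Iio x₀ with hT
  have hne : T.Nonempty := ⟨_, ⟨x₀ - 1, by simp, rfl⟩⟩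
  have hbdd : BddAbove T := by
    refine ⟨(φ (x₀ + 1) - φ x₀) / ((x₀ + 1) - x₀), ?_⟩
    rintro s ⟨x, hx, rfl⟩
    exact hφ.slope_mono_adjacent (mem_univ x) (mem_univ _) hx (by linarith)
  refine ⟨sSup T, fun y => ?_⟩
  rcases lt_trichotomy y x₀ with h | h | h
  · have hmem : (φ x₀ - φ y) / (x₀ - y) ∈ T := ⟨y, h, rfl⟩
    have := le_csSup hbdd hmem
    rw [div_le_iff₀ (by linarith)] at this
    nlinarith
  · simp [h]
  · have : sSup T ≤ (φ y - φ x₀) / (y - x₀) := by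
      refine csSup_le hne ?_
      rintro s ⟨x, hx, rfl⟩
      exact hφ.slope_mono_adjacent (mem_univ x) (mem_univ y) hx h
    rw [le_div_iff₀ (by linarith)] at this
    nlinarith

/-- Jensen's inequality for conditional sublinear expectations: for any
convex `φ : ℝ → ℝ` and any `t`, if `X` and `φ(X)` are both in `H`, then
`E_t(φ(X)) ≥ φ(E_t(X))`. -/
theorem condSLExp_jensen (S : CondSLExp Ω) (φ : ℝ → ℝ) (hφ : ConvexOn ℝ Set.univ φ)
    (t : ℕ) (X : Ω → ℝ) (hX : X ∈ S.H) (hφX : (fun ω => φ (X ω)) ∈ S.H) :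
    ∀ ω, φ (S.Et t X ω) ≤ S.Et t (fun ω' => φ (X ω')) ω := by
  -- preliminaries
  have hnegX : (fun ω' => -(X ω')) ∈ S.H := by
    have := S.smul_mem (-1) X hX
    convert this using 1; funext ω'; simp
  have hEt0 : S.Et t (fun _ => (0 : ℝ)) = fun _ => (0 : ℝ) :=
    S.proj t _ (S.const_mem 0) measurable_const
  have hneg_ge : ∀ ω, -(S.Et t X ω) ≤ S.Et t (fun ω' => -(X ω')) ω := by
    intro ω
    have hsum : X + (fun ω' => -(X ω')) = fun _ => (0 : ℝ) := by
      funext ω'; simp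
    have := S.subadd t X hX (fun ω' => -(X ω')) hnegX ω
    rw [hsum, hEt0] at this
    simp only at this
    linarith
  intro ω
  obtain ⟨a, ha⟩ := exists_support_line hφ (S.Et t X ω)
  set x₀ := S.Et t X ω with hx₀
  set b : ℝ := φ x₀ - a * x₀ with hb
  -- the affine minorant g = a•X + b
  have haX : (fun ω' => a * X ω') ∈ S.H := by
    have := S.smul_mem a X hX
    convert this using 1; funext ω'; simp
  have hg : (fun ω' => a * X ω' + b) ∈ S.H := by
    have := S.add_mem _ haX _ (S.const_mem b)
    convert this using 1; funext ω'; simp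
  -- step 1: E_t(φ∘X) ≥ E_t(g)
  have step1 : S.Et t (fun ω' => a * X ω' + b) ω ≤ S.Et t (fun ω' => φ (X ω')) ω := by
    refine S.mono t _ hg _ hφX (fun ω' => ?_) ω
    have := ha (X ω')
    nlinarith [ha (X ω')]
  -- step 2: E_t(g) ≥ E_t(a•X) + b
  have step2 : S.Et t (fun ω' => a * X ω') ω + b ≤ S.Et t (fun ω' => a * X ω' + b) ω := by
    have hsum : (fun ω' => a * X ω' + b) + (fun _ => -b) = fun ω' => a * X ω' := by
      funext ω'; simp
    have hsub := S.subadd t _ hg _ (S.const_mem (-b)) ω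
    rw [hsum] at hsub
    have hEb : S.Et t (fun _ => (-b : ℝ)) = fun _ => (-b : ℝ) :=
      S.proj t _ (S.const_mem (-b)) measurable_const
    rw [hEb] at hsub
    simp only at hsub
    linarith
  -- step 3: E_t(a•X) ≥ a * E_t X
  have step3 : a * x₀ ≤ S.Et t (fun ω' => a * X ω') ω := by
    have hph := S.poshom t (fun _ => a) (S.const_mem a) measurable_const X hX haX ω
    rcases le_or_gt 0 a with h | h
    · rw [hph]
      simp [max_eq_left h, max_eq_right (neg_nonpos_of_nonneg h), hx₀]
    · rw [hph]
      have h1 : max a 0 = 0 := max_eq_right h.le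
      have h2 : max (-a) 0 = -a := max_eq_left (by linarith)
      rw [h1, h2]
      have := hneg_ge ω
      nlinarith
  -- combine
  have : φ x₀ = a * x₀ + b := by rw [hb]; ring
  linarith
end

section
/- A subset K of L¹ is uniformly integrable under a sublinear expectation E if and only if (i) {E(|X|) : X ∈ K} is bounded, and (ii) for every ε > 0 there is δ > 0 such that for all measurable A with E(I_A) ≤ δ, one has E(I_A|X|) < ε for all X ∈ K. -/
open MeasureTheory Filter Set

/-- A sublinear expectation `E` on a linear space `H` of real-valued functions on `Ω`
containing the constants and closed under `|·|`, satisfying monotonicity,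
constant preserving, sub-additivity and positive homogeneity. -/
structure SublinearExp (Ω : Type*) where
  H : Set (Ω → ℝ)
  E : (Ω → ℝ) → ℝ
  const_mem : ∀ c : ℝ, (fun _ => c) ∈ H
  abs_mem : ∀ X ∈ H, (fun ω => |X ω|) ∈ H
  add_mem : ∀ X ∈ H, ∀ Y ∈ H, X + Y ∈ H
  smul_mem : ∀ (c : ℝ), ∀ X ∈ H, c • X ∈ H
  mono : ∀ X ∈ H, ∀ Y ∈ H, (∀ ω, X ω ≤ Y ω) → E X ≤ E Y
  const : ∀ c : ℝ, E (fun _ => c) = c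
  subadd : ∀ X ∈ H, ∀ Y ∈ H, E (X + Y) ≤ E X + E Y
  poshom : ∀ (c : ℝ), 0 ≤ c → ∀ X ∈ H, E (c • X) = c * E X

/-- `K` is uniformly integrable w.r.t. `E`: `E(I_{|X|≥c}·|X|) → 0` as `c → ∞`,
uniformly in `X ∈ K`. -/
def SublinearExp.UnifInt {Ω : Type*} (S : SublinearExp Ω) (K : Set (Ω → ℝ)) : Prop :=
  ∀ ε > (0 : ℝ), ∃ c₀ : ℝ, ∀ c ≥ c₀, ∀ X ∈ K,
    S.E (fun ω => if c ≤ |X ω| then |X ω| else 0) < ε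

/-- for a sublinear expectation with the monotone continuity (Fatou)
property, `K ⊆ L¹` is uniformly integrable iff (i) `{E(|X|) : X ∈ K}` is bounded and
(ii) for every `ε > 0` there is `δ > 0` such that `E(I_A) ≤ δ` implies
`E(I_A |X|) < ε` for all `X ∈ K`. -/
theorem unifInt_iff {Ω : Type*} [MeasurableSpace Ω] (S : SublinearExp Ω)
    (hmeas : ∀ X ∈ S.H, Measurable X)
    (hind : ∀ (A : Set Ω), MeasurableSet A → ∀ X ∈ S.H, A.indicator X ∈ S.H)
    (hfatou : ∀ X : ℕ → Ω → ℝ, (∀ i, X i ∈ S.H) → (∀ ω, Antitone fun i => X i ω) →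
      (∀ ω, Filter.Tendsto (fun i => X i ω) Filter.atTop (nhds 0)) →
      Filter.Tendsto (fun i => S.E (X i)) Filter.atTop (nhds 0))
    (K : Set (Ω → ℝ)) (hK : K ⊆ S.H) :
    S.UnifInt K ↔
      (∃ M : ℝ, ∀ X ∈ K, S.E (fun ω => |X ω|) ≤ M) ∧
      (∀ ε > (0 : ℝ), ∃ δ > (0 : ℝ), ∀ A : Set Ω, MeasurableSet A →
        S.E (A.indicator fun _ => (1 : ℝ)) ≤ δ →
        ∀ X ∈ K, S.E (A.indicator fun ω => |X ω|) < ε) := by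
  have ind1 : ∀ A : Set Ω, MeasurableSet A → A.indicator (fun _ => (1 : ℝ)) ∈ S.H :=
    fun A hA => hind A hA _ (S.const_mem 1)
  constructor
  · intro hUI
    refine ⟨?_, ?_⟩
    · obtain ⟨c₀, hc₀⟩ := hUI 1 one_pos
      refine ⟨1 + max c₀ 0, fun X hX => ?_⟩
      set c := max c₀ 0 with hcdef
      have hc0 : (0 : ℝ) ≤ c := le_max_right _ _
      have hXH := hK hX
      have habs := S.abs_mem X hXH
      have hA : MeasurableSet {ω | c ≤ |X ω|} :=
        measurableSet_le measurable_const (hmeas X hXH).abs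
      have heq : Set.indicator {ω | c ≤ |X ω|} (fun ω => |X ω|) =
          (fun ω => if c ≤ |X ω| then |X ω| else 0) := by
        funext ω
        by_cases h : c ≤ |X ω| <;> simp [Set.indicator_apply, Set.mem_setOf_eq, h]
      have htr : (fun ω => if c ≤ |X ω| then |X ω| else 0) ∈ S.H :=
        heq ▸ hind _ hA _ habs
      have hsum : ((fun ω => if c ≤ |X ω| then |X ω| else 0) + fun _ => c) ∈ S.H :=
        S.add_mem _ htr _ (S.const_mem c)
      have hmono : S.E (fun ω => |X ω|) ≤
          S.E ((fun ω => if c ≤ |X ω| then |X ω| else 0) + fun _ => c) := by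
        refine S.mono _ habs _ hsum fun ω => ?_
        by_cases h : c ≤ |X ω|
        · simp only [Pi.add_apply, if_pos h]; linarith
        · simp only [Pi.add_apply, if_neg h]; linarith [not_le.1 h]
      have hsub := S.subadd _ htr _ (S.const_mem c)
      have hlt := hc₀ c (le_max_left _ _) X hX
      have hconst := S.const c
      linarith
    · intro ε hε
      obtain ⟨c₀, hc₀⟩ := hUI (ε / 2) (by positivity)
      set c := max c₀ 1 with hcdef
      have hcpos : (0 : ℝ) < c := lt_of_lt_of_le one_pos (le_max_right _ _)
      refine ⟨ε / (2 * c), by positivity, fun A hA hAδ X hX => ?_⟩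
      have hXH := hK hX
      have habs := S.abs_mem X hXH
      have hAset : MeasurableSet {ω | c ≤ |X ω|} :=
        measurableSet_le measurable_const (hmeas X hXH).abs
      have heq : Set.indicator {ω | c ≤ |X ω|} (fun ω => |X ω|) =
          (fun ω => if c ≤ |X ω| then |X ω| else 0) := by
        funext ω
        by_cases h : c ≤ |X ω| <;> simp [Set.indicator_apply, Set.mem_setOf_eq, h]
      have htr : (fun ω => if c ≤ |X ω| then |X ω| else 0) ∈ S.H :=
        heq ▸ hind _ hAset _ habs
      have hcI : (c • A.indicator (fun _ => (1 : ℝ))) ∈ S.H :=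
        S.smul_mem c _ (ind1 A hA)
      have hsum : ((fun ω => if c ≤ |X ω| then |X ω| else 0) +
          c • A.indicator (fun _ => (1 : ℝ))) ∈ S.H := S.add_mem _ htr _ hcI
      have hmono : S.E (A.indicator fun ω => |X ω|) ≤
          S.E ((fun ω => if c ≤ |X ω| then |X ω| else 0) +
            c • A.indicator (fun _ => (1 : ℝ))) := by
        refine S.mono _ (hind A hA _ habs) _ hsum fun ω => ?_
        by_cases hω : ω ∈ A
        · by_cases h : c ≤ |X ω|
          · simp only [Pi.add_apply, Pi.smul_apply, Set.indicator_of_mem hω, if_pos h,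
              smul_eq_mul, mul_one]
            linarith
          · simp only [Pi.add_apply, Pi.smul_apply, Set.indicator_of_mem hω, if_neg h,
              smul_eq_mul, mul_one]
            linarith [not_le.1 h]
        · simp only [Pi.add_apply, Pi.smul_apply, Set.indicator_of_notMem hω,
            smul_eq_mul, mul_zero, add_zero]
          positivity
      have hsub := S.subadd _ htr _ hcI
      have hph := S.poshom c hcpos.le _ (ind1 A hA)
      have hlt := hc₀ c (le_max_left _ _) X hX
      have hbound : c * S.E (A.indicator fun _ => (1 : ℝ)) ≤ c * (ε / (2 * c)) :=
        mul_le_mul_of_nonneg_left hAδ hcpos.le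
      have hcalc : c * (ε / (2 * c)) = ε / 2 := by field_simp
      linarith
  · rintro ⟨⟨M, hM⟩, h2⟩
    intro ε hε
    obtain ⟨δ, hδ, hδ2⟩ := h2 ε hε
    refine ⟨max (M / δ) 1, fun c hc X hX => ?_⟩
    have hc1 : (1 : ℝ) ≤ c := le_trans (le_max_right _ _) hc
    have hcpos : (0 : ℝ) < c := lt_of_lt_of_le one_pos hc1
    have hXH := hK hX
    have habs := S.abs_mem X hXH
    set A := {ω | c ≤ |X ω|} with hAdef
    have hA : MeasurableSet A :=
      measurableSet_le measurable_const (hmeas X hXH).abs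
    have heq : Set.indicator A (fun ω => |X ω|) =
        (fun ω => if c ≤ |X ω| then |X ω| else 0) := by
      funext ω
      by_cases h : c ≤ |X ω| <;> simp [hAdef, Set.indicator_apply, Set.mem_setOf_eq, h]
    have key : c * S.E (A.indicator fun _ => (1 : ℝ)) ≤ S.E (fun ω => |X ω|) := by
      rw [← S.poshom c hcpos.le _ (ind1 A hA)]
      refine S.mono _ (S.smul_mem c _ (ind1 A hA)) _ habs fun ω => ?_
      by_cases hω : ω ∈ A
      · simpa [Set.indicator_of_mem hω] using (show c ≤ |X ω| from hω)
      · simp only [Pi.smul_apply, Set.indicator_of_notMem hω, smul_eq_mul, mul_zero]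
        positivity
    have hMδ : M / δ ≤ c := le_trans (le_max_left _ _) hc
    have hMcδ : M ≤ c * δ := (div_le_iff₀ hδ).1 hMδ
    have hIA : S.E (A.indicator fun _ => (1 : ℝ)) ≤ δ :=
      le_of_mul_le_mul_left (le_trans (key.trans (hM X hX)) hMcδ) hcpos
    have := hδ2 A hA hIA X hX
    rwa [heq] at this
end

section
/- Doob's maximal inequality for SL-submartingales, part (i): if (X_j, F_j)_{j=1}^n is an SL-submartingale, then for every λ > 0, λ·V(max_{1≤j≤n} X_j ≥ λ) ≤ E(I_{{max_{1≤j≤n} X_j ≥ λ}} X_n) ≤ E(X_n⁺) ≤ E(|X_n|), where V(A) := E(I_A). -/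
open MeasureTheory Filter Set

variable {Ω : Type*} [MeasurableSpace Ω]

namespace CondSLExp
variable (S : CondSLExp Ω)

lemma E_empty [IsEmpty Ω] (X : Ω → ℝ) : S.E X = 0 := by
  have hX : X = fun _ => (0:ℝ) := funext fun ω => isEmptyElim ω
  rw [hX]
  have h := S.fatou (fun _ _ => (0:ℝ)) (fun _ => S.const_mem 0)
    (fun ω => isEmptyElim ω) (fun ω => isEmptyElim ω)
  exact (tendsto_nhds_unique h tendsto_const_nhds).symm

lemma E_mono [Nonempty Ω] {X Y : Ω → ℝ} (hX : X ∈ S.H) (hY : Y ∈ S.H)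
    (hXY : ∀ ω, X ω ≤ Y ω) : S.E X ≤ S.E Y := by
  obtain ⟨ω₀⟩ := ‹Nonempty Ω›
  rw [← S.E0_eq X hX ω₀, ← S.E0_eq Y hY ω₀]
  exact S.mono 0 X hX Y hY hXY ω₀

lemma E_tower [Nonempty Ω] (t : ℕ) {Y : Ω → ℝ} (hY : Y ∈ S.H) :
    S.E (S.Et t Y) = S.E Y := by
  obtain ⟨ω₀⟩ := ‹Nonempty Ω›
  rw [← S.E0_eq (S.Et t Y) (S.Et_mem t Y hY) ω₀, ← S.E0_eq Y hY ω₀,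
    S.tower 0 t (Nat.zero_le t) Y hY]

lemma neg_mem {η : Ω → ℝ} (hη : η ∈ S.H) : -η ∈ S.H := by
  have h := S.smul_mem (-1 : ℝ) η hη
  rwa [neg_one_smul] at h

lemma trans_inv (t : ℕ) {Y η : Ω → ℝ} (hY : Y ∈ S.H) (hη : η ∈ S.H)
    (hηm : Measurable[S.F t] η) : ∀ ω, S.Et t (Y + η) ω = S.Et t Y ω + η ω := by
  intro ω
  have h1 := S.subadd t Y hY η hη ω
  rw [S.proj t η hη hηm] at h1
  have hYη : Y + η ∈ S.H := S.add_mem Y hY η hη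
  have hnegη : -η ∈ S.H := S.neg_mem hη
  have heq : (Y + η) + (-η) = Y := by funext ω'; simp
  have h2 := S.subadd t (Y + η) hYη (-η) hnegη ω
  rw [heq, S.proj t (-η) hnegη hηm.neg] at h2
  have : (-η) ω = -(η ω) := rfl
  rw [this] at h2
  linarith

lemma E_smul [Nonempty Ω] {c : ℝ} (hc : 0 ≤ c) {Y : Ω → ℝ} (hY : Y ∈ S.H) :
    S.E (fun ω => c * Y ω) = c * S.E Y := by
  obtain ⟨ω₀⟩ := ‹Nonempty Ω›
  have hcY : (fun ω => c * Y ω) ∈ S.H := S.smul_mem c Y hY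
  have h := S.poshom 0 (fun _ => c) (S.const_mem c) measurable_const Y hY hcY ω₀
  rw [S.E0_eq _ hcY ω₀] at h
  rw [h, S.E0_eq Y hY ω₀, max_eq_left hc, max_eq_right (by linarith), zero_mul, add_zero]

lemma sum_mem (f : ℕ → Ω → ℝ) (s : Finset ℕ) (h : ∀ i ∈ s, f i ∈ S.H) :
    (fun ω => ∑ i ∈ s, f i ω) ∈ S.H := by
  classical
  induction s using Finset.induction with
  | empty => simpa using S.const_mem 0
  | @insert a s' hx ih =>
    have : (fun ω => ∑ i ∈ insert a s', f i ω) = f a + fun ω => ∑ i ∈ s', f i ω := by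
      funext ω; simp [Finset.sum_insert hx]
    rw [this]
    exact S.add_mem _ (h a (Finset.mem_insert_self a s')) _
      (ih fun i hi => h i (Finset.mem_insert_of_mem hi))

end CondSLExp

/-- Doob's maximal inequality for `SL`-submartingales, part (i): if
`(X_j, F_j)_{j=1}^n` is an `SL`-submartingale, then for every `λ > 0`, with
`A = {max_{1≤j≤n} X_j ≥ λ}`,
`λ·V(A) ≤ E(I_A X_n) ≤ E(X_n⁺) ≤ E(|X_n|)`. -/

theorem doob_submartingale_max (S : CondSLExp Ω) (n : ℕ) (hn : 1 ≤ n)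
    (X : ℕ → Ω → ℝ) (hmem : ∀ j, X j ∈ S.H)
    (hadapt : ∀ j, Measurable[S.F j] (X j))
    (hsub : ∀ s t : ℕ, 1 ≤ s → s ≤ t → t ≤ n → ∀ ω, X s ω ≤ S.Et s (X t) ω)
    (lam : ℝ) (hlam : 0 < lam) :
    lam * S.V {ω | ∃ j, 1 ≤ j ∧ j ≤ n ∧ lam ≤ X j ω} ≤
        S.E ({ω | ∃ j, 1 ≤ j ∧ j ≤ n ∧ lam ≤ X j ω}.indicator (X n)) ∧
      S.E ({ω | ∃ j, 1 ≤ j ∧ j ≤ n ∧ lam ≤ X j ω}.indicator (X n)) ≤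
        S.E (fun ω => max (X n ω) 0) ∧
      S.E (fun ω => max (X n ω) 0) ≤ S.E (fun ω => |X n ω|) := by
  classical
  set A : Set Ω := {ω | ∃ j, 1 ≤ j ∧ j ≤ n ∧ lam ≤ X j ω} with hAdef
  -- A is measurable
  have hAeq : A = ⋃ j, ⋃ (_ : 1 ≤ j ∧ j ≤ n), X j ⁻¹' Ici lam := by
    ext ω; simp [hAdef, Set.mem_iUnion, and_assoc]
  have hAm : MeasurableSet A := by
    rw [hAeq]
    exact MeasurableSet.iUnion fun j => MeasurableSet.iUnion fun hj =>
      (S.F_le j) _ ((hadapt j) measurableSet_Ici)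
  have hIA : A.indicator (X n) ∈ S.H := S.indmul_mem A hAm (X n) (hmem n)
  -- the positive part and abs
  have habs : (fun ω => |X n ω|) ∈ S.H := S.abs_mem (X n) (hmem n)
  have hmaxeq : (fun ω => max (X n ω) 0) =
      fun ω => (2⁻¹ : ℝ) * ((X n + fun ω' => |X n ω'|) ω) := by
    funext ω
    simp only [Pi.add_apply]
    rcases le_total (X n ω) 0 with h | h
    · rw [max_eq_right h, abs_of_nonpos h]; ring
    · rw [max_eq_left h, abs_of_nonneg h]; ring
  have hmax : (fun ω => max (X n ω) 0) ∈ S.H := by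
    rw [hmaxeq]
    exact S.smul_mem 2⁻¹ _ (S.add_mem _ (hmem n) _ habs)
  rcases isEmpty_or_nonempty Ω with hE | hNE
  · rw [CondSLExp.V, S.E_empty, S.E_empty, S.E_empty, S.E_empty]
    norm_num
  · -- main case
    refine ⟨?_, ?_, ?_⟩
    case refine_2 =>
      refine S.E_mono hIA hmax fun ω => ?_
      by_cases hω : ω ∈ A
      · rw [Set.indicator_of_mem hω]; exact le_max_left _ _
      · rw [Set.indicator_of_notMem hω]; exact le_max_right _ _
    case refine_3 =>
      exact S.E_mono hmax habs fun ω => max_le (le_abs_self _) (abs_nonneg _)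
    -- first inequality
    set B : ℕ → Set Ω := fun j => {ω | lam ≤ X j ω ∧ ∀ i, 1 ≤ i → i < j → X i ω < lam}
      with hBdef
    set C : ℕ → Set Ω := fun k => {ω | ∃ j, k ≤ j ∧ j ≤ n ∧ ω ∈ B j} with hCdef
    set W : ℕ → Ω → ℝ := fun k ω => ∑ j ∈ Finset.Ico 1 k, (B j).indicator (X j) ω
      with hWdef
    set T : ℕ → Ω → ℝ := fun k => (C k).indicator (X n) + W k with hTdef
    have hBF : ∀ j : ℕ, MeasurableSet[S.F j] (B j) := by
      intro j
      have : B j = (X j ⁻¹' Ici lam) ∩ ⋂ (i : ℕ), ⋂ (_ : 1 ≤ i) (_ : i < j),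
          (X i ⁻¹' Iio lam) := by
        ext ω; simp [hBdef, Set.mem_iInter]
      rw [this]
      refine MeasurableSet.inter ((hadapt j) measurableSet_Ici) ?_
      refine MeasurableSet.iInter fun i => MeasurableSet.iInter fun h1 =>
        MeasurableSet.iInter fun h2 => ?_
      exact S.F_mono (le_of_lt h2) _ ((hadapt i) measurableSet_Iio)
    have hBm : ∀ j, MeasurableSet (B j) := fun j => S.F_le j _ (hBF j)
    have hCF : ∀ k : ℕ, MeasurableSet (C k) := by
      intro k
      have : C k = ⋃ j, ⋃ (_ : k ≤ j ∧ j ≤ n), B j := by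
        ext ω; simp [hCdef, Set.mem_iUnion, and_assoc]
      rw [this]
      exact MeasurableSet.iUnion fun j => MeasurableSet.iUnion fun _ => hBm j
    -- disjointness
    have hdisj : ∀ i j : ℕ, 1 ≤ i → i < j → ∀ ω, ω ∈ B j → ω ∉ B i := by
      intro i j h1 h2 ω hωj hωi
      exact absurd hωi.1 (not_le.mpr (hωj.2 i h1 h2))
    have hBsubA : ∀ j, 1 ≤ j → j ≤ n → B j ⊆ A := by
      intro j h1 h2 ω hω; exact ⟨j, h1, h2, hω.1⟩
    have hBsubC : ∀ k, k ≤ n → B k ⊆ C k := by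
      intro k hk ω hω; exact ⟨k, le_rfl, hk, hω⟩
    have hCnotB : ∀ k, 1 ≤ k → ∀ ω, ω ∈ C (k + 1) → ω ∉ B k := by
      intro k hk ω hω
      obtain ⟨j, hj1, hj2, hj3⟩ := hω
      exact hdisj k j hk hj1 ω hj3
    have hCsucc : ∀ k, ∀ ω, ω ∈ C (k+1) → ω ∈ C k := by
      intro k ω ⟨j, hj1, hj2, hj3⟩; exact ⟨j, by omega, hj2, hj3⟩
    have hCmem : ∀ k ω, ω ∈ C k ↔ (ω ∈ B k ∧ k ≤ n) ∨ ω ∈ C (k+1) := by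
      intro k ω
      constructor
      · rintro ⟨j, hj1, hj2, hj3⟩
        rcases eq_or_lt_of_le hj1 with rfl | h
        · exact Or.inl ⟨hj3, hj2⟩
        · exact Or.inr ⟨j, h, hj2, hj3⟩
      · rintro (⟨h1, h2⟩ | h)
        · exact ⟨k, le_rfl, h2, h1⟩
        · exact hCsucc k ω h
    have hC1 : C 1 = A := by
      ext ω
      constructor
      · rintro ⟨j, hj1, hj2, hj3⟩; exact ⟨j, hj1, hj2, hj3.1⟩
      · rintro hω
        have hex : ∃ j, 1 ≤ j ∧ j ≤ n ∧ lam ≤ X j ω := hω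
        have hex' : ∃ j, 1 ≤ j ∧ lam ≤ X j ω := by
          obtain ⟨j, h1, _, h3⟩ := hex; exact ⟨j, h1, h3⟩
        set m := Nat.find hex' with hm
        have hPm : 1 ≤ m ∧ lam ≤ X m ω := Nat.find_spec hex'
        have hmle : m ≤ n := by
          obtain ⟨j, h1, h2, h3⟩ := hex
          exact le_trans (Nat.find_min' hex' ⟨h1, h3⟩) h2
        refine ⟨m, hPm.1, hmle, hPm.2, ?_⟩
        intro i hi1 hi2
        have := Nat.find_min hex' hi2
        push_neg at this
        exact this hi1
    -- memberships
    have hIBH : ∀ j, (B j).indicator (X j) ∈ S.H :=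
      fun j => S.indmul_mem (B j) (hBm j) (X j) (hmem j)
    have hWH : ∀ k, W k ∈ S.H := by
      intro k
      exact S.sum_mem _ _ fun j _ => hIBH j
    have hWm : ∀ k t : ℕ, k ≤ t + 1 → Measurable[S.F t] (W k) := by
      intro k t hkt
      have : W k = fun ω => ∑ j ∈ Finset.Ico 1 k, ((B j).indicator (X j)) ω := rfl
      rw [this]
      refine Finset.measurable_sum _ fun j hj => ?_
      have hjt : j ≤ t := by
        rw [Finset.mem_Ico] at hj; omega
      exact Measurable.indicator ((hadapt j).mono (S.F_mono hjt) le_rfl)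
        (S.F_mono hjt _ (hBF j))
    have hCXH : ∀ k, (C k).indicator (X n) ∈ S.H :=
      fun k => S.indmul_mem (C k) (hCF k) (X n) (hmem n)
    have hTH : ∀ k, T k ∈ S.H := fun k => S.add_mem _ (hCXH k) _ (hWH k)
    -- the key step
    have hstep : ∀ k, 1 ≤ k → k + 1 ≤ n → S.E (T (k+1)) ≤ S.E (T k) := by
      intro k hk hk1
      have hkn : k ≤ n := by omega
      -- pointwise chain
      have h1 : ∀ ω, S.Et k (T (k+1)) ω = S.Et k ((C (k+1)).indicator (X n)) ω
          + W (k+1) ω :=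
        S.trans_inv k (hCXH (k+1)) (hWH (k+1)) (hWm (k+1) k le_rfl)
      have hWsucc : ∀ ω, W (k+1) ω = W k ω + (B k).indicator (X k) ω := by
        intro ω
        simp only [hWdef]
        rw [Finset.sum_Ico_succ_top hk]
      have hXle : ∀ ω, (B k).indicator (X k) ω ≤ (B k).indicator (S.Et k (X n)) ω := by
        intro ω
        by_cases hω : ω ∈ B k
        · rw [Set.indicator_of_mem hω, Set.indicator_of_mem hω]
          exact hsub k n hk hkn le_rfl ω
        · rw [Set.indicator_of_notMem hω, Set.indicator_of_notMem hω]
      have hloc1 : S.Et k ((B k).indicator (X n)) = (B k).indicator (S.Et k (X n)) :=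
        S.locality k (B k) (hBF k) (X n) (hmem n)
      -- split identity
      have e1 : (B k).indicator ((C k).indicator (X n)) = (B k).indicator (X n) := by
        funext ω'
        by_cases h' : ω' ∈ B k
        · rw [Set.indicator_of_mem h', Set.indicator_of_mem h',
            Set.indicator_of_mem (hBsubC k hkn h')]
        · rw [Set.indicator_of_notMem h', Set.indicator_of_notMem h']
      have e2 : ((B k)ᶜ).indicator ((C k).indicator (X n))
          = (C (k+1)).indicator (X n) := by
        funext ω'
        by_cases h1' : ω' ∈ C (k+1)
        · have hnb : ω' ∉ B k := hCnotB k hk ω' h1'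
          rw [Set.indicator_of_mem (Set.mem_compl hnb),
            Set.indicator_of_mem (hCsucc k ω' h1'), Set.indicator_of_mem h1']
        · by_cases h2' : ω' ∈ B k
          · rw [Set.indicator_of_notMem (by simpa using h2' : ω' ∉ (B k)ᶜ),
              Set.indicator_of_notMem h1']
          · have hnc : ω' ∉ C k := by
              intro hck
              rcases (hCmem k ω').mp hck with ⟨hb, _⟩ | hc
              · exact h2' hb
              · exact h1' hc
            rw [Set.indicator_of_mem (Set.mem_compl h2'),
              Set.indicator_of_notMem hnc, Set.indicator_of_notMem h1']
      have l1 := S.locality k (B k) (hBF k) _ (hCXH k)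
      have l2 := S.locality k ((B k)ᶜ) (MeasurableSet.compl (hBF k)) _ (hCXH k)
      rw [e1] at l1
      rw [e2] at l2
      have hsplit : ∀ ω, S.Et k ((B k).indicator (X n)) ω
          + S.Et k ((C (k+1)).indicator (X n)) ω
          = S.Et k ((C k).indicator (X n)) ω := by
        intro ω
        rw [l1, l2]
        by_cases hω : ω ∈ B k
        · rw [Set.indicator_of_mem hω,
            Set.indicator_of_notMem (by simpa using hω : ω ∉ (B k)ᶜ)]
          ring
        · rw [Set.indicator_of_notMem hω, Set.indicator_of_mem (Set.mem_compl hω)]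
          ring
      have h2 : ∀ ω, S.Et k (T k) ω = S.Et k ((C k).indicator (X n)) ω + W k ω :=
        S.trans_inv k (hCXH k) (hWH k) (hWm k k (by omega))
      have hpt : ∀ ω, S.Et k (T (k+1)) ω ≤ S.Et k (T k) ω := by
        intro ω
        rw [h1 ω, h2 ω, hWsucc ω, ← hsplit ω]
        have h3 := hXle ω
        have h4 : (B k).indicator (S.Et k (X n)) ω = S.Et k ((B k).indicator (X n)) ω :=
          (congrFun hloc1 ω).symm
        linarith [hXle ω, h4 ▸ hXle ω]
      calc S.E (T (k+1)) = S.E (S.Et k (T (k+1))) := (S.E_tower k (hTH (k+1))).symm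
        _ ≤ S.E (S.Et k (T k)) := S.E_mono (S.Et_mem k _ (hTH (k+1)))
            (S.Et_mem k _ (hTH k)) hpt
        _ = S.E (T k) := S.E_tower k (hTH k)
    -- chain
    have hchain : ∀ k, 1 ≤ k → k ≤ n → S.E (T k) ≤ S.E (T 1) := by
      intro k
      induction k with
      | zero => intro h; omega
      | succ k ih =>
        intro h1 hkn
        rcases Nat.eq_zero_or_pos k with rfl | hk
        · exact le_rfl
        · exact (hstep k hk hkn).trans (ih hk (by omega))
    -- T 1 = I_A X n
    have hT1 : T 1 = A.indicator (X n) := by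
      funext ω
      simp only [hTdef, Pi.add_apply, hWdef, Finset.Ico_self, Finset.sum_empty,
        add_zero, hC1]
    -- lam * I_A ≤ T n
    have hlamT : ∀ ω, lam * (A.indicator (fun _ => (1:ℝ))) ω ≤ T n ω := by
      intro ω
      by_cases hω : ω ∈ A
      · rw [Set.indicator_of_mem hω, mul_one]
        have hωC1 : ω ∈ C 1 := hC1.symm ▸ hω
        obtain ⟨j₀, hj1, hj2, hj3⟩ := hωC1
        by_cases hj : j₀ < n
        · have hWn : W n ω = X j₀ ω := by
            simp only [hWdef]
            rw [Finset.sum_eq_single_of_mem j₀ (Finset.mem_Ico.mpr ⟨hj1, hj⟩)]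
            · exact Set.indicator_of_mem hj3 _
            · intro b hb hbne
              rw [Finset.mem_Ico] at hb
              rcases lt_or_gt_of_ne hbne with hlt | hgt
              · exact Set.indicator_of_notMem (hdisj b j₀ hb.1 hlt ω hj3) _
              · refine Set.indicator_of_notMem (fun hωb => ?_) _
                exact absurd hj3.1 (not_le.mpr (hωb.2 j₀ hj1 hgt))
          have hωCn : ω ∉ C n := by
            rintro ⟨j, hjn1, hjn2, hjn3⟩
            have : j = n := le_antisymm hjn2 hjn1
            subst this
            exact hdisj j₀ j hj1 hj ω hjn3 hj3
          have : T n ω = X j₀ ω := by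
            simp only [hTdef, Pi.add_apply, Set.indicator_of_notMem hωCn, hWn,
              zero_add]
          rw [this]; exact hj3.1
        · have hj₀n : j₀ = n := by omega
          have hWn : W n ω = 0 := by
            simp only [hWdef]
            refine Finset.sum_eq_zero fun b hb => ?_
            rw [Finset.mem_Ico] at hb
            exact Set.indicator_of_notMem (hdisj b j₀ hb.1 (by omega) ω hj3) _
          have hωCn : ω ∈ C n := ⟨j₀, by omega, hj2, hj3⟩
          have hTn : T n ω = X n ω := by
            simp only [hTdef, Pi.add_apply, Set.indicator_of_mem hωCn, hWn, add_zero]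
          rw [hTn, ← hj₀n]
          exact hj3.1
      · rw [Set.indicator_of_notMem hω, mul_zero]
        have hWn : W n ω = 0 := by
          simp only [hWdef]
          refine Finset.sum_eq_zero fun b hb => ?_
          rw [Finset.mem_Ico] at hb
          refine Set.indicator_of_notMem (fun hωb => hω (hBsubA b hb.1 (by omega) hωb)) _
        have hωCn : ω ∉ C n := by
          rintro ⟨j, hjn1, hjn2, hjn3⟩
          exact hω (hBsubA j (by omega) hjn2 hjn3)
        simp only [hTdef, Pi.add_apply, Set.indicator_of_notMem hωCn, hWn, add_zero]
        exact le_rfl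
    -- assemble first inequality
    have hIA1 : (A.indicator fun _ => (1:ℝ)) ∈ S.H :=
      S.indmul_mem A hAm _ (S.const_mem 1)
    have hlamIH : (fun ω => lam * (A.indicator (fun _ => (1:ℝ))) ω) ∈ S.H :=
      S.smul_mem lam _ hIA1
    calc lam * S.V A = S.E (fun ω => lam * (A.indicator (fun _ => (1:ℝ))) ω) :=
          (S.E_smul (le_of_lt hlam) hIA1).symm
      _ ≤ S.E (T n) := S.E_mono hlamIH (hTH n) hlamT
      _ ≤ S.E (T 1) := hchain n hn le_rfl
      _ = S.E (A.indicator (X n)) := by rw [hT1]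
end

section
/- Doob's minimal inequality for SL-submartingales, part (ii): if (X_j, F_j)_{j=1}^n is an SL-submartingale, then for every λ > 0, λ·v(min_{1≤j≤n} X_j ≤ −λ) ≤ E(X_n) − E(X_1) + E(−I_{{min_{1≤j≤n} X_j ≤ −λ}} X_n) ≤ E(X_n) − E(X_1) + E(X_n⁻), where v(A) := −E(−I_A) and X⁻ := −min(X,0). -/
open MeasureTheory Filter Set

variable {Ω : Type*} [MeasurableSpace Ω]

section Aux
variable {Ω : Type*}

open Classical in
/-- First hitting index `j ∈ [1,k]` with `X j ω ≤ c`, or `k` if none. -/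
noncomputable def dstop (X : ℕ → Ω → ℝ) (c : ℝ) (k : ℕ) (ω : Ω) : ℕ :=
  if ∃ j, 1 ≤ j ∧ j ≤ k ∧ X j ω ≤ c then sInf {j | 1 ≤ j ∧ j ≤ k ∧ X j ω ≤ c} else k

/-- The stopped process `X_{τ ∧ k}`. -/
noncomputable def dZ (X : ℕ → Ω → ℝ) (c : ℝ) (k : ℕ) (ω : Ω) : ℝ :=
  X (dstop X c k ω) ω

variable {X : ℕ → Ω → ℝ} {c : ℝ} {k j : ℕ} {ω : Ω}

lemma dstop_mem (hk : 1 ≤ k) : 1 ≤ dstop X c k ω ∧ dstop X c k ω ≤ k := by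
  unfold dstop
  split_ifs with h
  · have hmem : sInf {j | 1 ≤ j ∧ j ≤ k ∧ X j ω ≤ c} ∈ {j | 1 ≤ j ∧ j ≤ k ∧ X j ω ≤ c} :=
      Nat.sInf_mem h
    exact ⟨hmem.1, hmem.2.1⟩
  · exact ⟨hk, le_rfl⟩

lemma dstop_hit (h : ∃ j, 1 ≤ j ∧ j ≤ k ∧ X j ω ≤ c) : X (dstop X c k ω) ω ≤ c := by
  unfold dstop; rw [if_pos h]; exact (Nat.sInf_mem h).2.2

lemma dstop_not_hit (h : ¬ ∃ j, 1 ≤ j ∧ j ≤ k ∧ X j ω ≤ c) : dstop X c k ω = k := by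
  unfold dstop; rw [if_neg h]

lemma dstop_le_iff (hjk : j < k) :
    dstop X c k ω ≤ j ↔ ∃ i, 1 ≤ i ∧ i ≤ j ∧ X i ω ≤ c := by
  unfold dstop
  split_ifs with h
  · constructor
    · intro hle
      have hmem := Nat.sInf_mem h
      exact ⟨_, hmem.1, hle, hmem.2.2⟩
    · rintro ⟨i, h1, h2, h3⟩
      exact le_trans (Nat.sInf_le ⟨h1, le_trans h2 hjk.le, h3⟩) h2
  · constructor
    · intro hle; omega
    · rintro ⟨i, h1, h2, h3⟩
      exact absurd ⟨i, h1, le_trans h2 hjk.le, h3⟩ h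

open Classical in
lemma dstop_succ :
    dstop X c (k+1) ω =
      if ∃ j, 1 ≤ j ∧ j ≤ k ∧ X j ω ≤ c then dstop X c k ω else k + 1 := by
  classical
  split_ifs with h
  · have hd := Nat.sInf_mem h
    have h' : ∃ j, 1 ≤ j ∧ j ≤ k + 1 ∧ X j ω ≤ c := by
      obtain ⟨j, h1, h2, h3⟩ := h; exact ⟨j, h1, by omega, h3⟩
    unfold dstop
    rw [if_pos h', if_pos h]
    apply le_antisymm
    · exact Nat.sInf_le ⟨hd.1, hd.2.1.trans (Nat.le_succ k), hd.2.2⟩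
    · have hm := Nat.sInf_mem h'
      have hle : sInf {j | 1 ≤ j ∧ j ≤ k + 1 ∧ X j ω ≤ c} ≤ k :=
        le_trans (Nat.sInf_le ⟨hd.1, hd.2.1.trans (Nat.le_succ k), hd.2.2⟩) hd.2.1
      exact Nat.sInf_le ⟨hm.1, hle, hm.2.2⟩
  · unfold dstop
    split_ifs with h'
    · have hm := Nat.sInf_mem h'
      have h1 : sInf {j | 1 ≤ j ∧ j ≤ k + 1 ∧ X j ω ≤ c} ≤ k + 1 := hm.2.1
      by_contra hne
      have h2 : sInf {j | 1 ≤ j ∧ j ≤ k + 1 ∧ X j ω ≤ c} ≤ k := by omega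
      exact h ⟨_, hm.1, h2, hm.2.2⟩
    · rfl

lemma dstop_eq_measSet {m' : MeasurableSpace Ω}
    (hX : ∀ i, i ≤ k → Measurable[m'] (X i)) (hk : 1 ≤ k) (j : ℕ) :
    MeasurableSet[m'] {ω | dstop X c k ω = j} := by
  classical
  set U : ℕ → Set Ω := fun j => ⋃ i, ⋃ (_ : 1 ≤ i ∧ i ≤ j), {ω | X i ω ≤ c} with hU
  have hUmeas : ∀ j, j ≤ k → MeasurableSet[m'] (U j) := by
    intro j hj
    exact MeasurableSet.iUnion fun i => MeasurableSet.iUnion fun hi =>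
      measurableSet_le (hX i (le_trans hi.2 hj)) measurable_const
  have hUle : ∀ j, j < k → {ω | dstop X c k ω ≤ j} = U j := by
    intro j hj
    ext ω
    simp only [hU, mem_setOf_eq, mem_iUnion, exists_prop]
    rw [dstop_le_iff hj]
    constructor
    · rintro ⟨i, h1, h2, h3⟩; exact ⟨i, ⟨h1, h2⟩, h3⟩
    · rintro ⟨i, ⟨h1, h2⟩, h3⟩; exact ⟨i, h1, h2, h3⟩
  rcases lt_trichotomy j k with hjk | hjk | hjk
  · rcases Nat.eq_zero_or_pos j with hj0 | hj1
    · subst hj0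
      have : {ω | dstop X c k ω = 0} = (∅ : Set Ω) := by
        ext ω; simp only [mem_setOf_eq, mem_empty_iff_false, iff_false]
        have := dstop_mem (X := X) (c := c) (ω := ω) hk
        omega
      rw [this]; exact MeasurableSet.empty
    · have : {ω | dstop X c k ω = j} = U j \ U (j - 1) := by
        rw [← hUle j hjk, ← hUle (j-1) (by omega)]
        ext ω
        simp only [mem_setOf_eq, mem_diff]
        omega
      rw [this]
      exact (hUmeas j hjk.le).diff (hUmeas (j-1) (by omega))
  · subst hjk
    have : {ω | dstop X c j ω = j} = (U (j - 1))ᶜ := by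
      rw [← hUle (j-1) (by omega)]
      ext ω
      simp only [mem_setOf_eq, mem_compl_iff]
      have := dstop_mem (X := X) (c := c) (ω := ω) hk
      omega
    rw [this]
    exact (hUmeas (j-1) (by omega)).compl
  · have : {ω | dstop X c k ω = j} = (∅ : Set Ω) := by
      ext ω; simp only [mem_setOf_eq, mem_empty_iff_false, iff_false]
      have := dstop_mem (X := X) (c := c) (ω := ω) hk
      omega
    rw [this]; exact MeasurableSet.empty

lemma dZ_eq_sum (hk : 1 ≤ k) :
    dZ X c k = fun ω => ∑ j ∈ Finset.Icc 1 k, ({ω' | dstop X c k ω' = j}).indicator (X j) ω := by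
  funext ω
  unfold dZ
  have hmem := dstop_mem (X := X) (c := c) (ω := ω) hk
  rw [Finset.sum_eq_single_of_mem (dstop X c k ω) (Finset.mem_Icc.2 ⟨hmem.1, hmem.2⟩)]
  · exact (Set.indicator_of_mem (show ω ∈ {ω' | dstop X c k ω' = dstop X c k ω} from rfl)
      (X (dstop X c k ω))).symm
  · intro b _ hb
    exact Set.indicator_of_notMem (fun h => hb (h.symm)) (X _)

end Aux

/-- Doob's minimal inequality for `SL`-submartingales, part (ii): if
`(X_j, F_j)_{j=1}^n` is an `SL`-submartingale, then for every `λ > 0`, with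
`B = {min_{1≤j≤n} X_j ≤ -λ}` and lower capacity `v(B) := -E(-I_B)`,
`λ·v(B) ≤ E(X_n) - E(X_1) + E(-I_B X_n) ≤ E(X_n) - E(X_1) + E(X_n⁻)`. -/
theorem doob_submartingale_min (S : CondSLExp Ω) (n : ℕ) (hn : 1 ≤ n)
    (X : ℕ → Ω → ℝ) (hmem : ∀ j, X j ∈ S.H)
    (hadapt : ∀ j, Measurable[S.F j] (X j))
    (hsub : ∀ s t : ℕ, 1 ≤ s → s ≤ t → t ≤ n → ∀ ω, X s ω ≤ S.Et s (X t) ω)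
    (lam : ℝ) (hlam : 0 < lam) :
    lam * (-(S.E (fun ω => -({ω' | ∃ j, 1 ≤ j ∧ j ≤ n ∧ X j ω' ≤ -lam}.indicator
          (fun _ => (1 : ℝ)) ω)))) ≤
        S.E (X n) - S.E (X 1) +
          S.E (fun ω => -({ω' | ∃ j, 1 ≤ j ∧ j ≤ n ∧ X j ω' ≤ -lam}.indicator (X n) ω)) ∧
      S.E (X n) - S.E (X 1) +
          S.E (fun ω => -({ω' | ∃ j, 1 ≤ j ∧ j ≤ n ∧ X j ω' ≤ -lam}.indicator (X n) ω)) ≤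
        S.E (X n) - S.E (X 1) + S.E (fun ω => -(min (X n ω) 0)) := by
  classical
  rcases isEmpty_or_nonempty Ω with hΩ | hΩ
  · have h0 : S.E (fun _ : Ω => (0 : ℝ)) = 0 := by
      have ht := S.fatou (fun _ => fun _ => (0 : ℝ)) (fun _ => S.const_mem 0)
        (fun ω => (IsEmpty.false ω).elim) (fun ω => (IsEmpty.false ω).elim)
      exact tendsto_nhds_unique tendsto_const_nhds ht
    have hEf : ∀ f : Ω → ℝ, S.E f = 0 := by
      intro f
      have hf : f = (fun _ : Ω => (0 : ℝ)) := funext fun ω => (IsEmpty.false ω).elim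
      rw [hf]; exact h0
    constructor <;> simp [hEf]
  · obtain ⟨ω₀⟩ := hΩ
    -- closure of H under pointwise negation
    have hneg : ∀ f ∈ S.H, (fun ω => -(f ω)) ∈ S.H := by
      intro f hf
      have h1 := S.smul_mem (-1) f hf
      have h2 : (-1 : ℝ) • f = fun ω => -(f ω) := by funext ω; simp
      rwa [h2] at h1
    -- closure of H under finite sums
    have hsum_mem : ∀ (s : Finset ℕ) (f : ℕ → Ω → ℝ), (∀ j ∈ s, f j ∈ S.H) →
        (fun ω => ∑ j ∈ s, f j ω) ∈ S.H := by
      intro s f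
      induction s using Finset.induction_on with
      | empty => intro _; simpa using S.const_mem 0
      | @insert a s ha ih =>
        intro hf
        have h1 : (fun ω => ∑ j ∈ insert a s, f j ω)
            = f a + fun ω => ∑ j ∈ s, f j ω := by
          funext ω; simp [Finset.sum_insert ha]
        rw [h1]
        exact S.add_mem _ (hf a (Finset.mem_insert_self a s))
          _ (ih fun j hj => hf j (Finset.mem_insert_of_mem hj))
    -- measurability of the hitting sets
    have hSmeas : ∀ k : ℕ,
        MeasurableSet[S.F k] {ω | ∃ j, 1 ≤ j ∧ j ≤ k ∧ X j ω ≤ -lam} := by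
      intro k
      have hrw : {ω | ∃ j, 1 ≤ j ∧ j ≤ k ∧ X j ω ≤ -lam}
          = ⋃ j, ⋃ (_ : 1 ≤ j ∧ j ≤ k), {ω | X j ω ≤ -lam} := by
        ext ω
        simp only [mem_setOf_eq, mem_iUnion, exists_prop]
        constructor
        · rintro ⟨j, h1, h2, h3⟩; exact ⟨j, ⟨h1, h2⟩, h3⟩
        · rintro ⟨j, ⟨h1, h2⟩, h3⟩; exact ⟨j, h1, h2, h3⟩
      rw [hrw]
      exact MeasurableSet.iUnion fun j => MeasurableSet.iUnion fun hj =>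
        measurableSet_le ((hadapt j).mono (S.F_mono hj.2) le_rfl) measurable_const
    -- the stopped process belongs to H and is adapted
    have hZmem : ∀ k, 1 ≤ k →
        dZ X (-lam) k ∈ S.H ∧ Measurable[S.F k] (dZ X (-lam) k) := by
      intro k hk
      have hmeasS : ∀ j, MeasurableSet[S.F k] {ω | dstop X (-lam) k ω = j} := fun j =>
        dstop_eq_measSet (fun i hik => (hadapt i).mono (S.F_mono hik) le_rfl) hk j
      have hrep := dZ_eq_sum (X := X) (c := -lam) (k := k) hk
      constructor
      · rw [hrep]
        exact hsum_mem _ _ fun j _ =>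
          S.indmul_mem _ (S.F_le k _ (hmeasS j)) (X j) (hmem j)
      · rw [hrep]
        refine Finset.measurable_sum _ fun j hj => ?_
        have hXj : Measurable[S.F k] (X j) :=
          (hadapt j).mono (S.F_mono (Finset.mem_Icc.1 hj).2) le_rfl
        exact hXj.indicator (hmeasS j)
    -- a pointwise consequence of locality
    have hloc : ∀ (t : ℕ) (A : Set Ω), MeasurableSet[S.F t] A → ∀ V ∈ S.H, ∀ W ∈ S.H,
        A.indicator V = A.indicator W → ∀ ω ∈ A, S.Et t V ω = S.Et t W ω := by
      intro t A hA V hV W hW hVW ω hω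
      have h1 := S.locality t A hA V hV
      have h2 := S.locality t A hA W hW
      have h3 : A.indicator (S.Et t V) = A.indicator (S.Et t W) := by
        rw [← h1, ← h2, hVW]
      have h4 := congrFun h3 ω
      simpa [Set.indicator_of_mem hω] using h4
    -- one-step optional stopping inequality
    have hstep : ∀ k, 1 ≤ k → k + 1 ≤ n →
        S.E (dZ X (-lam) k) ≤ S.E (dZ X (-lam) (k + 1)) := by
      intro k hk1 hkn
      obtain ⟨hZkH, hZkM⟩ := hZmem k hk1
      obtain ⟨hZk1H, _⟩ := hZmem (k + 1) (by omega)
      have hAmeas := hSmeas k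
      have hsucc : ∀ ω, ω ∈ {ω | ∃ j, 1 ≤ j ∧ j ≤ k ∧ X j ω ≤ -lam} →
          dZ X (-lam) (k + 1) ω = dZ X (-lam) k ω := by
        intro ω hω
        unfold dZ
        rw [dstop_succ, if_pos (show ∃ j, 1 ≤ j ∧ j ≤ k ∧ X j ω ≤ -lam from hω)]
      have hsucc' : ∀ ω, ω ∉ {ω | ∃ j, 1 ≤ j ∧ j ≤ k ∧ X j ω ≤ -lam} →
          dZ X (-lam) (k + 1) ω = X (k + 1) ω := by
        intro ω hω
        unfold dZ
        rw [dstop_succ, if_neg (show ¬∃ j, 1 ≤ j ∧ j ≤ k ∧ X j ω ≤ -lam from hω)]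
      have hpt : ∀ ω, dZ X (-lam) k ω ≤ S.Et k (dZ X (-lam) (k + 1)) ω := by
        intro ω
        by_cases hω : ω ∈ {ω | ∃ j, 1 ≤ j ∧ j ≤ k ∧ X j ω ≤ -lam}
        · have heq : S.Et k (dZ X (-lam) (k + 1)) ω = S.Et k (dZ X (-lam) k) ω := by
            refine hloc k _ hAmeas _ hZk1H _ hZkH ?_ ω hω
            funext ω'
            by_cases h' : ω' ∈ {ω | ∃ j, 1 ≤ j ∧ j ≤ k ∧ X j ω ≤ -lam}
            · rw [Set.indicator_of_mem h', Set.indicator_of_mem h', hsucc ω' h']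
            · rw [Set.indicator_of_notMem h', Set.indicator_of_notMem h']
          rw [heq, S.proj k _ hZkH hZkM]
        · have heq : S.Et k (dZ X (-lam) (k + 1)) ω = S.Et k (X (k + 1)) ω := by
            refine hloc k _ hAmeas.compl _ hZk1H _ (hmem (k + 1)) ?_ ω hω
            funext ω'
            by_cases h' : ω' ∈ {ω | ∃ j, 1 ≤ j ∧ j ≤ k ∧ X j ω ≤ -lam}
            · rw [Set.indicator_of_notMem (by simpa using h'),
                Set.indicator_of_notMem (by simpa using h')]
            · rw [Set.indicator_of_mem (by simpa using h'),
                Set.indicator_of_mem (by simpa using h'), hsucc' ω' h']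
          have hz : dZ X (-lam) k ω = X k ω := by
            unfold dZ; rw [dstop_not_hit hω]
          rw [heq, hz]
          exact hsub k (k + 1) hk1 (Nat.le_succ k) hkn ω
      calc S.E (dZ X (-lam) k) = S.Et 0 (dZ X (-lam) k) ω₀ := (S.E0_eq _ hZkH ω₀).symm
        _ ≤ S.Et 0 (S.Et k (dZ X (-lam) (k + 1))) ω₀ :=
            S.mono 0 _ hZkH _ (S.Et_mem k _ hZk1H) hpt ω₀
        _ = S.Et 0 (dZ X (-lam) (k + 1)) ω₀ := by
            rw [S.tower 0 k (Nat.zero_le k) _ hZk1H]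
        _ = S.E (dZ X (-lam) (k + 1)) := S.E0_eq _ hZk1H ω₀
    -- iterate
    have hind : ∀ k, 1 ≤ k → k ≤ n → S.E (dZ X (-lam) 1) ≤ S.E (dZ X (-lam) k) := by
      intro k
      induction k with
      | zero => intro h _; exact (Nat.not_succ_le_zero 0 h).elim
      | succ m ih =>
        intro _ hn'
        rcases Nat.eq_zero_or_pos m with hm | hm
        · subst hm; exact le_rfl
        · exact le_trans (ih hm (by omega)) (hstep m hm hn')
    have hZ1 : dZ X (-lam) 1 = X 1 := by
      funext ω
      unfold dZ
      have h := dstop_mem (X := X) (c := -lam) (k := 1) (ω := ω) le_rfl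
      have h1 : dstop X (-lam) 1 ω = 1 := le_antisymm h.2 h.1
      rw [h1]
    set B : Set Ω := {ω' | ∃ j, 1 ≤ j ∧ j ≤ n ∧ X j ω' ≤ -lam} with hB
    have hBmeasF : MeasurableSet[S.F n] B := by rw [hB]; exact hSmeas n
    have hIB : B.indicator (fun _ => (1 : ℝ)) ∈ S.H :=
      S.indmul_mem B (S.F_le n B hBmeasF) _ (S.const_mem 1)
    have hY : (fun ω => -(B.indicator (fun _ => (1 : ℝ)) ω)) ∈ S.H := hneg _ hIB
    have hIBX : B.indicator (X n) ∈ S.H := S.indmul_mem B (S.F_le n B hBmeasF) _ (hmem n)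
    have hh : (fun ω => -(B.indicator (X n) ω)) ∈ S.H := hneg _ hIBX
    have hg : (fun ω => lam * (-(B.indicator (fun _ => (1 : ℝ)) ω))) ∈ S.H := by
      have h1 := S.smul_mem lam _ hY
      have h2 : lam • (fun ω => -(B.indicator (fun _ => (1 : ℝ)) ω))
          = fun ω => lam * (-(B.indicator (fun _ => (1 : ℝ)) ω)) := by
        funext ω; simp [smul_eq_mul]
      rwa [h2] at h1
    have hXh : (X n + fun ω => -(B.indicator (X n) ω)) ∈ S.H := S.add_mem _ (hmem n) _ hh
    have hf : ((fun ω => lam * (-(B.indicator (fun _ => (1 : ℝ)) ω)))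
        + (X n + fun ω => -(B.indicator (X n) ω))) ∈ S.H := S.add_mem _ hg _ hXh
    obtain ⟨hZnH, _⟩ := hZmem n hn
    have hptf : ∀ ω, dZ X (-lam) n ω
        ≤ ((fun ω => lam * (-(B.indicator (fun _ => (1 : ℝ)) ω)))
          + (X n + fun ω => -(B.indicator (X n) ω))) ω := by
      intro ω
      by_cases hω : ω ∈ B
      · have h1 : dZ X (-lam) n ω ≤ -lam := dstop_hit hω
        simp only [Pi.add_apply, Set.indicator_of_mem hω]
        nlinarith [h1]
      · have h1 : dZ X (-lam) n ω = X n ω := by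
          unfold dZ; rw [dstop_not_hit hω]
        simp only [Pi.add_apply, Set.indicator_of_notMem hω]
        rw [h1]
        simp
    have hE1 : S.E (X 1) ≤ S.E (dZ X (-lam) n) := by
      rw [← hZ1]; exact hind n hn le_rfl
    have hE2 : S.E (dZ X (-lam) n)
        ≤ S.E ((fun ω => lam * (-(B.indicator (fun _ => (1 : ℝ)) ω)))
          + (X n + fun ω => -(B.indicator (X n) ω))) := by
      calc S.E (dZ X (-lam) n) = S.Et 0 (dZ X (-lam) n) ω₀ := (S.E0_eq _ hZnH ω₀).symm
        _ ≤ S.Et 0 ((fun ω => lam * (-(B.indicator (fun _ => (1 : ℝ)) ω)))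
            + (X n + fun ω => -(B.indicator (X n) ω))) ω₀ :=
            S.mono 0 _ hZnH _ hf hptf ω₀
        _ = _ := S.E0_eq _ hf ω₀
    have hE3 : S.E ((fun ω => lam * (-(B.indicator (fun _ => (1 : ℝ)) ω)))
          + (X n + fun ω => -(B.indicator (X n) ω)))
        ≤ S.E (fun ω => lam * (-(B.indicator (fun _ => (1 : ℝ)) ω)))
          + (S.E (X n) + S.E (fun ω => -(B.indicator (X n) ω))) := by
      have h1 := S.subadd 0 _ hg _ hXh ω₀
      have h2 := S.subadd 0 _ (hmem n) _ hh ω₀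
      rw [S.E0_eq _ hf ω₀, S.E0_eq _ hg ω₀, S.E0_eq _ hXh ω₀] at h1
      rw [S.E0_eq _ hXh ω₀, S.E0_eq _ (hmem n) ω₀, S.E0_eq _ hh ω₀] at h2
      linarith
    have hpos : S.E (fun ω => lam * (-(B.indicator (fun _ => (1 : ℝ)) ω)))
        = lam * S.E (fun ω => -(B.indicator (fun _ => (1 : ℝ)) ω)) := by
      have hp := S.poshom 0 (fun _ => lam) (S.const_mem lam) measurable_const
        (fun ω => -(B.indicator (fun _ => (1 : ℝ)) ω)) hY hg ω₀
      have e1 : max lam 0 = lam := max_eq_left hlam.le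
      have e2 : max (-lam) 0 = 0 := max_eq_right (neg_nonpos.mpr hlam.le)
      simp only [e1, e2, zero_mul, add_zero] at hp
      rw [S.E0_eq _ hg ω₀, S.E0_eq _ hY ω₀] at hp
      exact hp
    have hnegpart : (fun ω => -(min (X n ω) 0)) ∈ S.H := by
      have h1 := S.abs_mem (X n) (hmem n)
      have h2 := hneg (X n) (hmem n)
      have h3 := S.add_mem _ h1 _ h2
      have h4 := S.smul_mem (1 / 2) _ h3
      have h5 : (1 / 2 : ℝ) • ((fun ω => |X n ω|) + fun ω => -(X n ω))
          = fun ω => -(min (X n ω) 0) := by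
        funext ω
        simp only [Pi.smul_apply, Pi.add_apply, smul_eq_mul]
        rcases le_total (X n ω) 0 with hle | hle
        · rw [min_eq_left hle, abs_of_nonpos hle]; ring
        · rw [min_eq_right hle, abs_of_nonneg hle]; ring
      rwa [h5] at h4
    have hpt2 : ∀ ω, (fun ω => -(B.indicator (X n) ω)) ω
        ≤ (fun ω => -(min (X n ω) 0)) ω := by
      intro ω
      by_cases hω : ω ∈ B
      · simp only [Set.indicator_of_mem hω]
        exact neg_le_neg (min_le_left _ _)
      · simp only [Set.indicator_of_notMem hω, neg_zero]
        exact neg_nonneg.mpr (min_le_right _ _)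
    have hE4 : S.E (fun ω => -(B.indicator (X n) ω)) ≤ S.E (fun ω => -(min (X n ω) 0)) := by
      calc S.E (fun ω => -(B.indicator (X n) ω))
          = S.Et 0 (fun ω => -(B.indicator (X n) ω)) ω₀ := (S.E0_eq _ hh ω₀).symm
        _ ≤ S.Et 0 (fun ω => -(min (X n ω) 0)) ω₀ := S.mono 0 _ hh _ hnegpart hpt2 ω₀
        _ = _ := S.E0_eq _ hnegpart ω₀
    constructor
    · nlinarith [hE1, hE2, hE3, hpos]
    · linarith
end

section
/- Chebyshev-type maximal inequality for SL-martingales: if (X_j, F_j)_{j=1}^n is an SL-martingale with E(X_j²) < ∞ for all 1 ≤ j ≤ n, then for every λ > 0, V(max_{1≤j≤n}|X_j| ≥ λ) ≤ E(X_n²)/λ². -/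
open MeasureTheory Filter Set

variable {Ω : Type*} [MeasurableSpace Ω]

section Aux

variable {Ω : Type*} [MeasurableSpace Ω]

lemma measSet_abs_lt {α : Type*} [m' : MeasurableSpace α] {f : α → ℝ} (hf : Measurable[m'] f)
    (c : ℝ) : MeasurableSet[m'] {ω | |f ω| < c} :=
  measurableSet_lt hf.abs measurable_const

lemma measSet_le_abs {α : Type*} [m' : MeasurableSpace α] {f : α → ℝ} (hf : Measurable[m'] f)
    (c : ℝ) : MeasurableSet[m'] {ω | c ≤ |f ω|} :=
  measurableSet_le measurable_const hf.abs

lemma CondSLExp.Et_const (S : CondSLExp Ω) (t : ℕ) (c : ℝ) :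
    S.Et t (fun _ => c) = fun _ => c :=
  S.proj t _ (S.const_mem c) measurable_const

lemma CondSLExp.Et_zero (S : CondSLExp Ω) (t : ℕ) (ω : Ω) :
    S.Et t (fun _ => (0 : ℝ)) ω = 0 := by
  rw [S.Et_const t 0]

lemma CondSLExp.Et_add_const (S : CondSLExp Ω) (t : ℕ) (h : Ω → ℝ) (hh : h ∈ S.H)
    (c : ℝ) (ω : Ω) : S.Et t (fun ω' => h ω' + c) ω = S.Et t h ω + c := by
  have hcmem : (fun _ : Ω => c) ∈ S.H := S.const_mem c
  have h1 : S.Et t (fun ω' => h ω' + c) ω ≤ S.Et t h ω + c := by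
    have := S.subadd t h hh (fun _ => c) hcmem ω
    have heq : h + (fun _ : Ω => c) = fun ω' => h ω' + c := rfl
    rw [heq, S.Et_const t c] at this
    exact this
  have h2 : S.Et t h ω ≤ S.Et t (fun ω' => h ω' + c) ω + (-c) := by
    have hsum : (fun ω' => h ω' + c) ∈ S.H := by
      have := S.add_mem h hh (fun _ => c) hcmem
      exact this
    have := S.subadd t (fun ω' => h ω' + c) hsum (fun _ => -c) (S.const_mem (-c)) ω
    have heq : (fun ω' => h ω' + c) + (fun _ : Ω => -c) = h := by
      funext ω'; simp
    rw [heq, S.Et_const t (-c)] at this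
    exact this
  linarith

lemma CondSLExp.Et_nonneg (S : CondSLExp Ω) (t : ℕ) (h : Ω → ℝ) (hh : h ∈ S.H)
    (hpos : ∀ ω, 0 ≤ h ω) (ω : Ω) : 0 ≤ S.Et t h ω := by
  have := S.mono t (fun _ => (0:ℝ)) (S.const_mem 0) h hh hpos ω
  rwa [S.Et_zero t ω] at this

lemma CondSLExp.neg_Et_le (S : CondSLExp Ω) (t : ℕ) (h : Ω → ℝ) (hh : h ∈ S.H) (ω : Ω) :
    -(S.Et t h ω) ≤ S.Et t (fun ω' => -(h ω')) ω := by
  have hneg : (fun ω' => -(h ω')) ∈ S.H := by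
    have := S.smul_mem (-1) h hh
    have heq : (-1 : ℝ) • h = fun ω' => -(h ω') := by funext ω'; simp
    rwa [heq] at this
  have := S.subadd t h hh (fun ω' => -(h ω')) hneg ω
  have heq : h + (fun ω' => -(h ω')) = fun _ : Ω => (0:ℝ) := by funext ω'; simp
  rw [heq, S.Et_zero t ω] at this
  linarith

/-- Jensen's inequality for the square under a sublinear conditional expectation. -/
lemma CondSLExp.sq_Et_le (S : CondSLExp Ω) (t : ℕ) (Z : Ω → ℝ) (hZ : Z ∈ S.H)
    (hZ2 : (fun ω => (Z ω) ^ 2) ∈ S.H) (ω : Ω) :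
    (S.Et t Z ω) ^ 2 ≤ S.Et t (fun ω' => (Z ω') ^ 2) ω := by
  set a : ℝ := S.Et t Z ω with ha
  have h2aZ : (fun ω' => 2 * a * Z ω') ∈ S.H := by
    have := S.smul_mem (2 * a) Z hZ
    exact this
  have hgH : (fun ω' => 2 * a * Z ω' + -(a ^ 2)) ∈ S.H := by
    have := S.add_mem _ h2aZ (fun _ => -(a ^ 2)) (S.const_mem _)
    exact this
  have hmono := S.mono t _ hgH _ hZ2 (fun ω' => by nlinarith [sq_nonneg (Z ω' - a)]) ω
  have hEg : S.Et t (fun ω' => 2 * a * Z ω' + -(a ^ 2)) ω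
      = S.Et t (fun ω' => 2 * a * Z ω') ω + -(a ^ 2) :=
    S.Et_add_const t _ h2aZ _ ω
  have hph := S.poshom t (fun _ => 2 * a) (S.const_mem _) measurable_const Z hZ h2aZ ω
  have hkey : a ^ 2 ≤ S.Et t (fun ω' => 2 * a * Z ω') ω + -(a ^ 2) := by
    rw [hph]
    rcases le_or_gt 0 a with hA | hA
    · rw [max_eq_left (by linarith), max_eq_right (by linarith)]
      rw [← ha]; nlinarith
    · rw [max_eq_right (by linarith), max_eq_left (by linarith)]
      have := S.neg_Et_le t Z hZ ω
      rw [← ha] at *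
      nlinarith
  calc a ^ 2 ≤ S.Et t (fun ω' => 2 * a * Z ω') ω + -(a ^ 2) := hkey
    _ = S.Et t (fun ω' => 2 * a * Z ω' + -(a ^ 2)) ω := hEg.symm
    _ ≤ S.Et t (fun ω' => (Z ω') ^ 2) ω := hmono

lemma CondSLExp.sum_mem_s10 (S : CondSLExp Ω) (s : Finset ℕ) (f : ℕ → Ω → ℝ)
    (hf : ∀ i ∈ s, f i ∈ S.H) : (fun ω => ∑ i ∈ s, f i ω) ∈ S.H := by
  classical
  induction s using Finset.induction_on with
  | empty => simpa using S.const_mem 0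
  | @insert x s' hx ih =>
    have h1 : f x ∈ S.H := hf x (Finset.mem_insert_self x s')
    have h2 : (fun ω => ∑ i ∈ s', f i ω) ∈ S.H := ih fun i hi => hf i (Finset.mem_insert_of_mem hi)
    have := S.add_mem _ h1 _ h2
    have heq : f x + (fun ω => ∑ i ∈ s', f i ω) = fun ω => ∑ i ∈ insert x s', f i ω := by
      funext ω; simp [Finset.sum_insert hx]
    rwa [heq] at this

end Aux

/-- Chebyshev-type maximal inequality for `SL`-martingales: if
`(X_j, F_j)_{j=1}^n` is an `SL`-martingale with `E(X_j²) < ∞` (i.e. `X_j² ∈ H`) for all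
`1 ≤ j ≤ n`, then for every `λ > 0`, `V(max_{1≤j≤n}|X_j| ≥ λ) ≤ E(X_n²)/λ²`. -/
theorem slMartingale_chebyshev (S : CondSLExp Ω) (n : ℕ) (hn : 1 ≤ n)
    (X : ℕ → Ω → ℝ) (hmem : ∀ j, X j ∈ S.H)
    (hadapt : ∀ j, Measurable[S.F j] (X j))
    (hmart : ∀ s t : ℕ, 1 ≤ s → s ≤ t → t ≤ n → ∀ ω, X s ω = S.Et s (X t) ω)
    (hsq : ∀ j, 1 ≤ j → j ≤ n → (fun ω => (X j ω) ^ 2) ∈ S.H)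
    (lam : ℝ) (hlam : 0 < lam) :
    S.V {ω | ∃ j, 1 ≤ j ∧ j ≤ n ∧ lam ≤ |X j ω|} ≤
      S.E (fun ω => (X n ω) ^ 2) / lam ^ 2 := by
  classical
  rcases isEmpty_or_nonempty Ω with hE | hNE
  · have hzero : ∀ g : Ω → ℝ, S.E g = 0 := by
      intro g
      have hg0 : g = fun _ => (0 : ℝ) := funext fun ω => isEmptyElim ω
      subst hg0
      have hf := S.fatou (fun _ _ => (0 : ℝ)) (fun _ => S.const_mem 0)
        (fun ω => isEmptyElim ω) (fun ω => isEmptyElim ω)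
      exact tendsto_nhds_unique tendsto_const_nhds hf
    unfold CondSLExp.V
    rw [hzero, hzero]
    simp
  · obtain ⟨ω₀⟩ := hNE
    set A : Set Ω := {ω | ∃ j, 1 ≤ j ∧ j ≤ n ∧ lam ≤ |X j ω|} with hA
    set Y : Ω → ℝ := fun ω => (X n ω) ^ 2 with hYdef
    have hYH : Y ∈ S.H := hsq n hn le_rfl
    set D : ℕ → Set Ω := fun j => {ω | ∀ i, 1 ≤ i → i < j → |X i ω| < lam} with hDdef
    set B : ℕ → Set Ω := fun j =>
      {ω | (∀ i, 1 ≤ i → i < j → |X i ω| < lam) ∧ lam ≤ |X j ω|} with hBdef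
    have hDmeas : ∀ t k, k ≤ t + 1 → MeasurableSet[S.F t] (D k) := by
      intro t k hk
      have hDeq : D k = ⋂ i, ⋂ (_ : 1 ≤ i), ⋂ (_ : i < k), {ω | |X i ω| < lam} := by
        ext ω; simp [hDdef]
      rw [hDeq]
      refine MeasurableSet.iInter fun i => MeasurableSet.iInter fun h1 =>
        MeasurableSet.iInter fun h2 => ?_
      exact measSet_abs_lt (m' := S.F t) ((hadapt i).mono (S.F_mono (by omega)) le_rfl) lam
    have hBmeas : ∀ j, MeasurableSet[S.F j] (B j) := by
      intro j
      have hBeq : B j = D j ∩ {ω | lam ≤ |X j ω|} := rfl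
      rw [hBeq]
      exact (hDmeas j j (by omega)).inter (measSet_le_abs (m' := S.F j) (hadapt j) lam)
    have hBm : ∀ j, MeasurableSet (B j) := fun j => S.F_le j _ (hBmeas j)
    have hDm : ∀ k, MeasurableSet (D k) := fun k => S.F_le k _ (hDmeas k k (by omega))
    set SB : ℕ → Ω → ℝ :=
      fun j ω => ∑ i ∈ Finset.Icc j n, (B i).indicator (fun _ => lam ^ 2) ω with hSBdef
    have hindH : ∀ j, (B j).indicator (fun _ => lam ^ 2) ∈ S.H :=
      fun j => S.indmul_mem _ (hBm j) _ (S.const_mem _)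
    have hSBH : ∀ j, SB j ∈ S.H := fun j => S.sum_mem_s10 _ _ (fun i _ => hindH i)
    have hIDYH : ∀ k, (D k).indicator Y ∈ S.H := fun k => S.indmul_mem _ (hDm k) _ hYH
    have hEtYnn : ∀ t ω, 0 ≤ S.Et t Y ω := fun t ω =>
      S.Et_nonneg t Y hYH (fun ω' => sq_nonneg (X n ω')) ω
    have hjensen : ∀ t ω, (S.Et t (X n) ω) ^ 2 ≤ S.Et t Y ω := fun t ω =>
      S.sq_Et_le t (X n) (hmem n) hYH ω
    have hSBsplit : ∀ j, j ≤ n →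
        SB j = fun ω => (B j).indicator (fun _ => lam ^ 2) ω + SB (j + 1) ω := by
      intro j hj
      funext ω
      show (∑ i ∈ Finset.Icc j n, (B i).indicator (fun _ => lam ^ 2) ω)
        = (B j).indicator (fun _ => lam ^ 2) ω
          + ∑ i ∈ Finset.Icc (j + 1) n, (B i).indicator (fun _ => lam ^ 2) ω
      rw [← Finset.Ioc_insert_left hj, Finset.sum_insert (by simp), Finset.Icc_add_one_left_eq_Ioc]
    have key : ∀ d j, 1 ≤ j → j ≤ n → n - j = d →
        ∀ ω, S.Et j (SB j) ω ≤ S.Et j ((D j).indicator Y) ω := by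
      intro d
      induction d with
      | zero =>
        intro j h1 hjn hd ω
        have hjn' : j = n := by omega
        subst hjn'
        refine S.mono j (SB j) (hSBH j) _ (hIDYH j) (fun ω' => ?_) ω
        have hSBj : SB j ω' = (B j).indicator (fun _ => lam ^ 2) ω' := by
          show (∑ i ∈ Finset.Icc j j, (B i).indicator (fun _ => lam ^ 2) ω')
            = (B j).indicator (fun _ => lam ^ 2) ω'
          rw [Finset.Icc_self, Finset.sum_singleton]
        rw [hSBj]
        by_cases hB' : ω' ∈ B j
        · rw [Set.indicator_of_mem hB', Set.indicator_of_mem (show ω' ∈ D j from hB'.1)]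
          have h2 := hB'.2
          show lam ^ 2 ≤ (X j ω') ^ 2
          nlinarith [abs_nonneg (X j ω'), sq_abs (X j ω')]
        · rw [Set.indicator_of_notMem hB']
          exact Set.indicator_nonneg (fun ω'' _ => sq_nonneg (X j ω'')) ω'
      | succ d ih =>
        intro j h1 hjn hd ω
        have hjlt : j < n := by omega
        have ihj := ih (j + 1) (by omega) (by omega) (by omega)
        have hEtind : S.Et j ((B j).indicator (fun _ => lam ^ 2))
            = (B j).indicator (fun _ => lam ^ 2) :=
          S.proj j _ (hindH j) (Measurable.indicator measurable_const (hBmeas j))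
        have hsub : S.Et j (SB j) ω
            ≤ (B j).indicator (fun _ => lam ^ 2) ω + S.Et j (SB (j + 1)) ω := by
          have hs := S.subadd j _ (hindH j) _ (hSBH (j + 1)) ω
          have heq : (B j).indicator (fun _ => lam ^ 2) + SB (j + 1) = SB j := by
            rw [hSBsplit j (by omega)]; rfl
          rw [heq, hEtind] at hs
          exact hs
        have hstep2 : S.Et j (SB (j + 1)) ω ≤ (D (j + 1)).indicator (S.Et j Y) ω := by
          calc S.Et j (SB (j + 1)) ω = S.Et j (S.Et (j + 1) (SB (j + 1))) ω := by
                rw [S.tower j (j + 1) (by omega) _ (hSBH (j + 1))]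
            _ ≤ S.Et j (S.Et (j + 1) ((D (j + 1)).indicator Y)) ω :=
                S.mono j _ (S.Et_mem _ _ (hSBH (j + 1))) _ (S.Et_mem _ _ (hIDYH (j + 1))) ihj ω
            _ = S.Et j ((D (j + 1)).indicator Y) ω := by
                rw [S.tower j (j + 1) (by omega) _ (hIDYH (j + 1))]
            _ = (D (j + 1)).indicator (S.Et j Y) ω := by
                rw [S.locality j (D (j + 1)) (hDmeas j (j + 1) le_rfl) Y hYH]
        have hloc : S.Et j ((D j).indicator Y) ω = (D j).indicator (S.Et j Y) ω := by
          rw [S.locality j (D j) (hDmeas j j (by omega)) Y hYH]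
        rw [hloc]
        have hfinal : (B j).indicator (fun _ => lam ^ 2) ω + (D (j + 1)).indicator (S.Et j Y) ω
            ≤ (D j).indicator (S.Et j Y) ω := by
          by_cases hBj : ω ∈ B j
          · have hnotD : ω ∉ D (j + 1) := fun hD =>
              absurd hBj.2 (not_le.mpr (hD j h1 (by omega)))
            rw [Set.indicator_of_mem hBj, Set.indicator_of_notMem hnotD,
              Set.indicator_of_mem (show ω ∈ D j from hBj.1)]
            have hXj : X j ω = S.Et j (X n) ω := hmart j n h1 (by omega) le_rfl ω
            have hj2 : lam ^ 2 ≤ (X j ω) ^ 2 := by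
              nlinarith [hBj.2, abs_nonneg (X j ω), sq_abs (X j ω)]
            have hjen := hjensen j ω
            rw [← hXj] at hjen
            linarith
          · by_cases hDj1 : ω ∈ D (j + 1)
            · have hDj : ω ∈ D j := fun i hi1 hi2 => hDj1 i hi1 (by omega)
              rw [Set.indicator_of_notMem hBj, Set.indicator_of_mem hDj1,
                Set.indicator_of_mem hDj]
              simp
            · rw [Set.indicator_of_notMem hBj, Set.indicator_of_notMem hDj1]
              simpa using Set.indicator_nonneg (fun ω' _ => hEtYnn j ω') ω
        linarith [hsub, hstep2, hfinal]
    have hC1 := key (n - 1) 1 le_rfl hn (by omega)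
    have hD1 : (D 1).indicator Y = Y := by
      have hu : D 1 = Set.univ :=
        Set.eq_univ_of_forall (fun ω i hi1 hi2 => absurd hi2 (by omega))
      rw [hu, Set.indicator_univ]
    have hAmeas : MeasurableSet A := by
      have hAeq : A = ⋃ j, {ω | 1 ≤ j ∧ j ≤ n ∧ lam ≤ |X j ω|} := by
        ext ω; simp [hA]
      rw [hAeq]
      refine MeasurableSet.iUnion fun j => ?_
      by_cases hj : 1 ≤ j ∧ j ≤ n
      · have he : {ω | 1 ≤ j ∧ j ≤ n ∧ lam ≤ |X j ω|} = {ω | lam ≤ |X j ω|} := by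
          ext ω; simp [hj.1, hj.2]
        rw [he]
        exact measurableSet_le measurable_const (S.H_meas _ (hmem j)).abs
      · have he : {ω | 1 ≤ j ∧ j ≤ n ∧ lam ≤ |X j ω|} = ∅ := by
          ext ω; simp; tauto
        rw [he]; exact MeasurableSet.empty
    have hIAH : A.indicator (fun _ => (1 : ℝ)) ∈ S.H :=
      S.indmul_mem A hAmeas _ (S.const_mem 1)
    have hscH : (fun ω => lam ^ 2 * A.indicator (fun _ => (1 : ℝ)) ω) ∈ S.H :=
      S.smul_mem (lam ^ 2) _ hIAH
    have hpt : ∀ ω, lam ^ 2 * A.indicator (fun _ => (1 : ℝ)) ω ≤ SB 1 ω := by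
      intro ω
      by_cases hωA : ω ∈ A
      · rw [Set.indicator_of_mem hωA]
        have hex : ∃ j, 1 ≤ j ∧ j ≤ n ∧ lam ≤ |X j ω| := hωA
        obtain ⟨hj1, hj2, hj3⟩ := Nat.find_spec hex
        have hωB : ω ∈ B (Nat.find hex) := by
          refine ⟨fun i hi1 hi2 => ?_, hj3⟩
          by_contra hcon
          exact Nat.find_min hex hi2 ⟨hi1, by omega, not_lt.mp hcon⟩
        calc lam ^ 2 * 1 = (B (Nat.find hex)).indicator (fun _ => lam ^ 2) ω := by
              rw [Set.indicator_of_mem hωB]; ring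
          _ ≤ SB 1 ω :=
            Finset.single_le_sum
              (fun i _ => Set.indicator_nonneg (fun _ _ => by positivity) ω)
              (Finset.mem_Icc.mpr ⟨hj1, hj2⟩)
      · rw [Set.indicator_of_notMem hωA]
        simp only [mul_zero]
        exact Finset.sum_nonneg fun i _ => Set.indicator_nonneg (fun _ _ => by positivity) ω
    have hEmono : ∀ f, f ∈ S.H → ∀ g, g ∈ S.H → (∀ ω, f ω ≤ g ω) → S.E f ≤ S.E g := by
      intro f hf g hg hfg
      rw [← S.E0_eq f hf ω₀, ← S.E0_eq g hg ω₀]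
      exact S.mono 0 f hf g hg hfg ω₀
    have h1 : S.E (fun ω => lam ^ 2 * A.indicator (fun _ => (1 : ℝ)) ω) ≤ S.E (SB 1) :=
      hEmono _ hscH _ (hSBH 1) hpt
    have h2 : S.E (SB 1) ≤ S.E Y := by
      rw [← S.E0_eq _ (hSBH 1) ω₀, ← S.E0_eq Y hYH ω₀]
      calc S.Et 0 (SB 1) ω₀ = S.Et 0 (S.Et 1 (SB 1)) ω₀ := by
            rw [S.tower 0 1 (by omega) _ (hSBH 1)]
        _ ≤ S.Et 0 (S.Et 1 ((D 1).indicator Y)) ω₀ :=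
            S.mono 0 _ (S.Et_mem _ _ (hSBH 1)) _ (S.Et_mem _ _ (hIDYH 1)) hC1 ω₀
        _ = S.Et 0 ((D 1).indicator Y) ω₀ := by rw [S.tower 0 1 (by omega) _ (hIDYH 1)]
        _ = S.Et 0 Y ω₀ := by rw [hD1]
    have h3 : S.E (fun ω => lam ^ 2 * A.indicator (fun _ => (1 : ℝ)) ω)
        = lam ^ 2 * S.E (A.indicator (fun _ => (1 : ℝ))) := by
      have hph := S.poshom 0 (fun _ => lam ^ 2) (S.const_mem _) measurable_const _ hIAH hscH ω₀
      rw [max_eq_left (by positivity), max_eq_right (by nlinarith), zero_mul, add_zero,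
        S.E0_eq _ hscH ω₀, S.E0_eq _ hIAH ω₀] at hph
      exact hph
    have hfin : lam ^ 2 * S.E (A.indicator (fun _ => (1 : ℝ))) ≤ S.E Y := by
      rw [← h3]; exact le_trans h1 h2
    show S.E (A.indicator fun _ => (1 : ℝ)) ≤ S.E Y / lam ^ 2
    rw [le_div_iff₀ (by positivity : (0 : ℝ) < lam ^ 2)]
    nlinarith [hfin]
end
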